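/- Let W ∈ L(H) be a positive operator and A ∈ L(H) an operator with closed range such that the pair (W, range A) is compatible, and let T be the shorted operator of W to range A. Then for X₀ ∈ L(H) the following conditions are equivalent: (i) X₀ is a W-inverse of A, i.e. ⟨W(AX₀x − x), AX₀x − x⟩ ≤ ⟨W(Az − x), Az − x⟩ for all x, z ∈ H; (ii) (AX₀ − I)*W(AX₀ − I) = T and T ≤ (AX − I)*W(AX − I) in the Loewner order for every X ∈ L(H); (iii) A*W(AX₀ − I) = 0. -/

import Mathlib

open ContinuousLinearMap
open scoped ComplexInnerProductSpace

noncomputable section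

variable {H : Type*} [NormedAddCommGroup H] [InnerProductSpace ℂ H] [CompleteSpace H]

/-- `M(W,S)`: the set of operators `X` with `0 ≤ X ≤ W` (Loewner order) and `range X ⊆ S^⊥`. -/
def MSet (W : H →L[ℂ] H) (S : Submodule ℂ H) : Set (H →L[ℂ] H) :=
  {X | X.IsPositive ∧ (W - X).IsPositive ∧ LinearMap.range (X : H →ₗ[ℂ] H) ≤ Sᗮ}

/-- `T` is the shorted operator of `W` to `S`, i.e. the maximum of `M(W,S)` in the Loewner
order. -/
def IsShorted (W : H →L[ℂ] H) (S : Submodule ℂ H) (T : H →L[ℂ] H) : Prop :=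
  T ∈ MSet W S ∧ ∀ X ∈ MSet W S, (T - X).IsPositive

/-- The minus order: `A ⁻≤ B` iff there are bounded idempotents `P, Q` with `A = PB` and
`A* = QB*`. -/
def MinusLE (A B : H →L[ℂ] H) : Prop :=
  ∃ P Q : H →L[ℂ] H, IsIdempotentElem P ∧ IsIdempotentElem Q ∧
    A = P ∘L B ∧ adjoint A = Q ∘L adjoint B

/-- The pair `(W, N)` is compatible: there is a bounded idempotent `Q` with range `N` such that
`WQ` is selfadjoint. -/
def Compatible (W : H →L[ℂ] H) (N : Submodule ℂ H) : Prop :=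
  ∃ Q : H →L[ℂ] H, IsIdempotentElem Q ∧ LinearMap.range (Q : H →ₗ[ℂ] H) = N ∧ IsSelfAdjoint (W ∘L Q)

/-- `M⁻(W,S)`: operators `X` with `X ⁻≤ W`, `range X ⊆ S^⊥` and `range X* ⊆ S^⊥`. -/
def MMinusSet (W : H →L[ℂ] H) (S : Submodule ℂ H) : Set (H →L[ℂ] H) :=
  {X | MinusLE X W ∧ LinearMap.range (X : H →ₗ[ℂ] H) ≤ Sᗮ ∧ LinearMap.range (adjoint X : H →ₗ[ℂ] H) ≤ Sᗮ}

/-- `X₀` is a `W`-inverse of `M` in `R(C)`: for every `x`, `X₀ x` is a `W`-weighted least squares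
solution of `M z = C x`. -/
def WInverseIn (W M C X₀ : H →L[ℂ] H) : Prop :=
  ∀ x z : H, (⟪W (M (X₀ x) - C x), M (X₀ x) - C x⟫).re ≤ (⟪W (M z - C x), M z - C x⟫).re

/-- The left weighted star order `A ₋*_W≤ B`. -/
def LStarW (W A B : H →L[ℂ] H) : Prop :=
  LinearMap.range (B : H →ₗ[ℂ] H) = LinearMap.range (A : H →ₗ[ℂ] H) ⊔ LinearMap.range (B - A : H →ₗ[ℂ] H) ∧
  LinearMap.range (A : H →ₗ[ℂ] H) ⊓ LinearMap.range (B - A : H →ₗ[ℂ] H) = ⊥ ∧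
  LinearMap.range (B - A : H →ₗ[ℂ] H) ≤ LinearMap.ker (adjoint A ∘L W : H →ₗ[ℂ] H)

/-- The right weighted star order `A ≤*_W B`. -/
def RStarW (W A B : H →L[ℂ] H) : Prop :=
  LinearMap.range (adjoint B : H →ₗ[ℂ] H) =
    LinearMap.range (adjoint A : H →ₗ[ℂ] H) ⊔ LinearMap.range (adjoint B - adjoint A : H →ₗ[ℂ] H) ∧
  LinearMap.range (adjoint A : H →ₗ[ℂ] H) ⊓ LinearMap.range (adjoint B - adjoint A : H →ₗ[ℂ] H) = ⊥ ∧
  LinearMap.range (adjoint B - adjoint A : H →ₗ[ℂ] H) ≤ LinearMap.ker (A ∘L W : H →ₗ[ℂ] H)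

/-- The weighted star order `A *_W≤ B`. -/
def StarW (W A B : H →L[ℂ] H) : Prop :=
  LStarW W A B ∧ RStarW W A B

lemma sa_move {W : H →L[ℂ] H} (h : IsSelfAdjoint W) (u v : H) : ⟪W u, v⟫ = ⟪u, W v⟫ := by
  conv_lhs => rw [← h.adjoint_eq]
  exact adjoint_inner_left W v u

lemma expand_re {W : H →L[ℂ] H} (h : IsSelfAdjoint W) (u v : H) :
    (⟪W (u + v), u + v⟫).re = (⟪W u, u⟫).re + 2 * (⟪W u, v⟫).re + (⟪W v, v⟫).re := by
  have h1 : (⟪W v, u⟫).re = (⟪W u, v⟫).re := by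
    rw [← inner_conj_symm, Complex.conj_re, ← sa_move h]
  rw [map_add, inner_add_left, inner_add_right, inner_add_right]
  simp only [Complex.add_re, h1]
  ring

lemma pos_re {W : H →L[ℂ] H} (h : W.IsPositive) (x : H) : 0 ≤ (⟪W x, x⟫).re := by
  have := h.inner_nonneg_left x
  exact h.re_inner_nonneg_left x

lemma one_to_three (W A X₀ : H →L[ℂ] H) (hW : W.IsPositive) (h1 : WInverseIn W A 1 X₀) :
    adjoint A ∘L (W ∘L (A ∘L X₀ - 1)) = 0 := by
  ext x
  simp only [comp_apply, sub_apply, one_apply, zero_apply]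
  set b := A (X₀ x) - x with hb
  set v := adjoint A (W b) with hv
  show v = 0
  set K := (⟪W (A v), A v⟫).re with hK
  have hKnn : 0 ≤ K := pos_re hW _
  have key : ∀ t : ℝ, 0 ≤ 2 * t * ‖v‖ ^ 2 + t ^ 2 * K := by
    intro t
    have h := h1 x (X₀ x + (t : ℂ) • v)
    have hz : A (X₀ x + (t : ℂ) • v) - (1 : H →L[ℂ] H) x = b + (t : ℂ) • A v := by
      simp [hb, map_add, map_smul]; abel
    rw [hz] at h
    have hexp := expand_re hW.isSelfAdjoint b ((t : ℂ) • A v)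
    have hcross : (⟪W b, (t : ℂ) • A v⟫).re = t * ‖v‖ ^ 2 := by
      rw [inner_smul_right]
      have : ⟪W b, A v⟫ = ⟪v, v⟫ := by rw [← adjoint_inner_left, ← hv]
      rw [this, inner_self_eq_norm_sq_to_K]
      simp [← Complex.ofReal_pow, ← Complex.ofReal_mul]
    have hquad : (⟪W ((t : ℂ) • A v), (t : ℂ) • A v⟫).re = t ^ 2 * K := by
      rw [map_smul, inner_smul_left, inner_smul_right]
      simp [hK]
      ring
    rw [hexp, hcross, hquad] at h
    have h' : (⟪W (A (X₀ x) - (1:H →L[ℂ] H) x), A (X₀ x) - (1:H →L[ℂ] H) x⟫).re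
        = (⟪W b, b⟫).re := by simp [hb]
    rw [h'] at h
    linarith
  by_contra hv0
  have hn : 0 < ‖v‖ ^ 2 := pow_pos (norm_pos_iff.mpr hv0) 2
  have hK1 : 0 < K + 1 := by linarith
  set d := ‖v‖ ^ 2 / (K + 1) with hd
  have hdm : d * (K + 1) = ‖v‖ ^ 2 := div_mul_cancel₀ _ (ne_of_gt hK1)
  have hdpos : 0 < d := div_pos hn hK1
  have h0 := key (-d)
  nlinarith [h0, hdm, hdpos, hKnn]

lemma three_to_one (W A X₀ : H →L[ℂ] H) (hW : W.IsPositive)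
    (h3 : adjoint A ∘L (W ∘L (A ∘L X₀ - 1)) = 0) : WInverseIn W A 1 X₀ := by
  intro x z
  have h3x : adjoint A (W (A (X₀ x) - x)) = 0 := by
    have := ContinuousLinearMap.ext_iff.mp h3 x
    simpa [comp_apply, sub_apply, one_apply] using this
  set b := A (X₀ x) - x with hb
  set w := A (z - X₀ x) with hw
  have hz : A z - (1 : H →L[ℂ] H) x = b + w := by
    simp [hb, hw, map_sub]
  have hx1 : A (X₀ x) - (1 : H →L[ℂ] H) x = b := by simp [hb]
  rw [hz, hx1, expand_re hW.isSelfAdjoint b w]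
  have hcross : (⟪W b, w⟫).re = 0 := by
    rw [hw, ← adjoint_inner_left, h3x, inner_zero_left]
    exact Complex.zero_re
  rw [hcross]
  have := pos_re hW w
  linarith

lemma S_pos (W B : H →L[ℂ] H) (hW : W.IsPositive) :
    (adjoint B ∘L (W ∘L B)).IsPositive := by
  have := hW.adjoint_conj B
  convert this using 1

lemma S_inner (W B : H →L[ℂ] H) (x y : H) :
    ⟪(adjoint B ∘L (W ∘L B)) x, y⟫ = ⟪W (B x), B y⟫ := by
  simp only [comp_apply]
  exact adjoint_inner_left B y (W (B x))

lemma S_mem (W A X₀ : H →L[ℂ] H) (hW : W.IsPositive)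
    (h3 : adjoint A ∘L (W ∘L (A ∘L X₀ - 1)) = 0) (h1 : WInverseIn W A 1 X₀) :
    (adjoint (A ∘L X₀ - 1) ∘L (W ∘L (A ∘L X₀ - 1))) ∈ MSet W (LinearMap.range (A : H →ₗ[ℂ] H)) := by
  set B := A ∘L X₀ - 1 with hBdef
  set S := adjoint B ∘L (W ∘L B) with hSdef
  have hBx : ∀ y, B y = A (X₀ y) - y := by intro y; simp [hBdef]
  have h3x : ∀ y, adjoint A (W (B y)) = 0 := by
    intro y
    have := ContinuousLinearMap.ext_iff.mp h3 y
    simpa [comp_apply] using this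
  refine ⟨S_pos W B hW, ⟨hW.1.sub (S_pos W B hW).1, ?_⟩, ?_⟩
  · intro x
    have h10 := h1 x 0
    simp only [map_zero, ContinuousLinearMap.one_apply, zero_sub] at h10
    have hneg : (⟪W (-x), -x⟫).re = (⟪W x, x⟫).re := by
      rw [map_neg, inner_neg_neg]
    rw [hneg] at h10
    have hre : S.reApplyInnerSelf x = (⟪S x, x⟫).re := rfl
    have : (W - S).reApplyInnerSelf x = (⟪W x, x⟫).re - (⟪S x, x⟫).re := by
      simp only [reApplyInnerSelf, sub_apply, inner_sub_left]
      simp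
    rw [this, S_inner]
    have hb : (⟪W (A (X₀ x) - x), A (X₀ x) - x⟫).re
        = (⟪W (B x), B x⟫).re := by rw [hBx x]
    rw [hb] at h10
    linarith
  · rintro _ ⟨x, rfl⟩
    rw [Submodule.mem_orthogonal]
    rintro _ ⟨y, rfl⟩
    have : ⟪S x, A y⟫ = 0 := by
      rw [S_inner]
      have hBA : B (A y) = A (X₀ (A y) - y) := by rw [hBx]; rw [map_sub]
      rw [hBA, ← adjoint_inner_left, h3x x, inner_zero_left]
    rw [← inner_conj_symm]; simp only [ContinuousLinearMap.coe_coe]; rw [this, map_zero]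

lemma S_max (W A X₀ : H →L[ℂ] H) (hW : W.IsPositive) :
    ∀ X ∈ MSet W (LinearMap.range (A : H →ₗ[ℂ] H)),
      ((adjoint (A ∘L X₀ - 1) ∘L (W ∘L (A ∘L X₀ - 1))) - X).IsPositive := by
  set B := A ∘L X₀ - 1 with hBdef
  set S := adjoint B ∘L (W ∘L B) with hSdef
  have hBx : ∀ y, B y = A (X₀ y) - y := by intro y; simp [hBdef]
  rintro X ⟨hXpos, hWX, hXr⟩
  have hXsa : ∀ u v : H, ⟪X u, v⟫ = ⟪u, X v⟫ := fun u v => sa_move hXpos.isSelfAdjoint u v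
  have hXA : ∀ y, X (A y) = 0 := by
    intro y
    have h0 : ⟪X (A y), X (A y)⟫ = 0 := by
      rw [hXsa]
      exact Submodule.inner_right_of_mem_orthogonal (LinearMap.mem_range_self (A : H →ₗ[ℂ] H) y)
        (hXr (LinearMap.mem_range_self (X : H →ₗ[ℂ] H) (X (A y))))
    exact inner_self_eq_zero.mp h0
  refine ⟨(S_pos W B hW).1.sub hXpos.1, ?_⟩
  intro x
  have hzero : ⟪X x, A (X₀ x)⟫ = 0 :=
    Submodule.inner_left_of_mem_orthogonal (LinearMap.mem_range_self (A : H →ₗ[ℂ] H) (X₀ x))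
      (hXr (LinearMap.mem_range_self (X : H →ₗ[ℂ] H) x))
  have e1 : ⟪X (B x), B x⟫ = ⟪X x, x⟫ := by
    rw [hBx, map_sub, hXA]
    simp [inner_sub_left, inner_sub_right, hzero]
  have e2 := pos_re hWX (B x)
  simp only [sub_apply, inner_sub_left, Complex.sub_re] at e2
  rw [e1] at e2
  have : (S - X).reApplyInnerSelf x = (⟪S x, x⟫).re - (⟪X x, x⟫).re := by
    simp only [reApplyInnerSelf, sub_apply, inner_sub_left]
    simp
  rw [this, S_inner]
  linarith

lemma re_sub (P Q : H →L[ℂ] H) (x : H) :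
    (P - Q).reApplyInnerSelf x = (⟪P x, x⟫).re - (⟪Q x, x⟫).re := by
  simp only [reApplyInnerSelf, sub_apply, inner_sub_left]
  simp

lemma loewner_antisymm {P Q : H →L[ℂ] H} (h1 : (P - Q).IsPositive) (h2 : (Q - P).IsPositive) :
    P = Q := by
  have hz : ∀ x : H, ⟪(P - Q) x, x⟫ = 0 := by
    intro x
    have a := pos_re h1 x
    have b := pos_re h2 x
    have hQP : (Q - P) x = -((P - Q) x) := by simp [sub_apply]
    rw [hQP, inner_neg_left] at b
    simp only [Complex.neg_re, neg_nonneg] at b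
    have hconj : ⟪(P - Q) x, x⟫ = starRingEnd ℂ ⟪(P - Q) x, x⟫ := by
      conv_lhs => rw [sa_move h1.isSelfAdjoint x x]
      exact (inner_conj_symm _ _).symm
    apply Complex.ext
    · simpa [inner_sub_left] using le_antisymm b a
    · have := congrArg Complex.im hconj
      simp only [Complex.conj_im] at this
      simp only [Complex.zero_im]
      linarith
  have hlin : ((P - Q : H →L[ℂ] H) : H →ₗ[ℂ] H) = 0 :=
    (inner_map_self_eq_zero _).mp hz
  have : (P - Q : H →L[ℂ] H) = 0 := by
    ext x
    have := LinearMap.ext_iff.mp hlin x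
    simpa using this
  exact sub_eq_zero.mp this

/-- if `(W, range A)` is compatible, then for `X₀` the conditions
(i) `X₀` is a `W`-inverse of `A`; (ii) `(AX₀ - I)* W (AX₀ - I) = T` and `T` is a Loewner
lower bound of `{(AX - I)* W (AX - I)}`; (iii) `A*W(AX₀ - I) = 0`, are equivalent. -/
theorem stmt19 (W A T X₀ : H →L[ℂ] H) (hW : W.IsPositive)
    (hA : IsClosed (LinearMap.range (A : H →ₗ[ℂ] H) : Set H))
    (hcomp : Compatible W (LinearMap.range (A : H →ₗ[ℂ] H)))
    (hT : IsShorted W (LinearMap.range (A : H →ₗ[ℂ] H)) T) :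
    [WInverseIn W A 1 X₀,
     adjoint (A ∘L X₀ - 1) ∘L (W ∘L (A ∘L X₀ - 1)) = T ∧
       ∀ X : H →L[ℂ] H,
         ((adjoint (A ∘L X - 1) ∘L (W ∘L (A ∘L X - 1))) - T).IsPositive,
     adjoint A ∘L (W ∘L (A ∘L X₀ - 1)) = 0].TFAE := by
  have hC : ∀ (Y : H →L[ℂ] H) (y : H), (A ∘L Y - 1) y = A (Y y) - y := by
    intro Y y; simp
  tfae_have 1 → 3 := one_to_three W A X₀ hW
  tfae_have 3 → 1 := three_to_one W A X₀ hW
  tfae_have 3 → 2 := by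
    intro h3
    have h1 := three_to_one W A X₀ hW h3
    have hmem := S_mem W A X₀ hW h3 h1
    have hTS := hT.2 _ hmem
    have hST := S_max W A X₀ hW T hT.1
    have hEq : adjoint (A ∘L X₀ - 1) ∘L (W ∘L (A ∘L X₀ - 1)) = T :=
      loewner_antisymm hST hTS
    refine ⟨hEq, fun X => ?_⟩
    rw [← hEq]
    refine ⟨(S_pos W _ hW).1.sub (S_pos W _ hW).1, fun x => ?_⟩
    have h := h1 x (X x)
    simp only [ContinuousLinearMap.one_apply] at h
    rw [re_sub, S_inner, S_inner, hC, hC]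
    exact by linarith
  tfae_have 2 → 1 := by
    rintro ⟨hTeq, hmin⟩ x z
    by_cases hx : x = 0
    · subst hx
      simp only [map_zero, one_apply, sub_zero, inner_zero_left]
      simpa using pos_re hW (A z)
    · set Xop : H →L[ℂ] H := ((⟪x, x⟫)⁻¹ • innerSL ℂ x).smulRight z with hXop
      have hXx : Xop x = z := by
        simp only [hXop, smulRight_apply, smul_apply, innerSL_apply_apply, smul_eq_mul]
        rw [inv_mul_cancel₀ (inner_self_ne_zero.mpr hx), one_smul]
      have h := pos_re (hmin Xop) x
      rw [sub_apply, inner_sub_left] at h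
      simp only [Complex.sub_re] at h
      rw [S_inner] at h
      have hT' : (⟪T x, x⟫).re = (⟪W ((A ∘L X₀ - 1) x), (A ∘L X₀ - 1) x⟫).re := by
        rw [← hTeq, S_inner]
      rw [hT', hC, hC, hXx] at h
      simp only [ContinuousLinearMap.one_apply]
      linarith
  tfae_finish
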